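/- Fix N ≥ 1 and d ≥ 1, and let μ be Lebesgue measure (volume) on the space Fin N → (Fin d → ℝ). Let D be a measurable fundamental domain (MeasureTheory.IsFundamentalDomain) for the action of S_N given by σ • x = x ∘ σ⁻¹. Let 𝒮 be the set of ψ ∈ L²(μ, ℂ) such that for every σ ∈ S_N, ψ(x ∘ σ) = ψ(x) for μ-almost every x (the symmetric subspace). Then 𝒮 is a closed linear subspace of L²(μ, ℂ), and the map sending ψ ∈ 𝒮 to √(N!) times the restriction of ψ to D (viewed as an element of L²(μ restricted to D, ℂ)) is a linear isometric bijection from 𝒮 onto L²(μ.restrict D, ℂ). -/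

import Mathlib

open MeasureTheory Pointwise

/-- The action of the symmetric group `S_N` on tuples: `σ • x = x ∘ σ⁻¹`. -/
instance permFunMulAction (N : ℕ) (X : Type*) : MulAction (Equiv.Perm (Fin N)) (Fin N → X) where
  smul σ x := x ∘ ⇑σ⁻¹
  one_smul x := by
    funext i
    simp [HSMul.hSMul]
  mul_smul σ τ x := by
    funext i
    simp [HSMul.hSMul, mul_inv_rev, Equiv.Perm.mul_apply]

section Aux

open Set Function ENNReal

variable (N d : ℕ)

instance : MeasurableSpace (Equiv.Perm (Fin N)) := ⊤

lemma stmt12_smul_def (σ : Equiv.Perm (Fin N)) (x : Fin N → Fin d → ℝ) :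
    σ • x = x ∘ ⇑σ⁻¹ := rfl

lemma stmt12_mp (σ : Equiv.Perm (Fin N)) :
    MeasurePreserving (fun x : Fin N → Fin d → ℝ => σ • x) volume volume := by
  have h := volume_preserving_arrowCongr' (β₁ := Fin d → ℝ) σ
    (MeasurableEquiv.refl (Fin d → ℝ)) (MeasurePreserving.id _)
  exact h

instance : SMulInvariantMeasure (Equiv.Perm (Fin N)) (Fin N → Fin d → ℝ)
    (volume : Measure (Fin N → Fin d → ℝ)) :=
  ⟨fun σ s hs => (stmt12_mp N d σ).measure_preimage hs.nullMeasurableSet⟩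

instance : MeasurableSMul (Equiv.Perm (Fin N)) (Fin N → Fin d → ℝ) where
  measurable_const_smul σ := (stmt12_mp N d σ).measurable
  measurable_smul_const _ := measurable_from_top

variable {N d}
variable {D : Set (Fin N → Fin d → ℝ)}

/-- Unfolded lintegral over a fundamental domain, for invariant functions. -/
lemma stmt12_lintegral_eq
    (hDfd : IsFundamentalDomain (Equiv.Perm (Fin N)) D
      (volume : Measure (Fin N → Fin d → ℝ)))
    (f : (Fin N → Fin d → ℝ) → ℝ≥0∞)
    (hf : ∀ σ : Equiv.Perm (Fin N),
      ∀ᵐ x ∂(volume : Measure (Fin N → Fin d → ℝ)), f (σ • x) = f x) :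
    ∫⁻ x, f x = (N.factorial : ℝ≥0∞) * ∫⁻ x in D, f x := by
  rw [hDfd.lintegral_eq_tsum'' f]
  have h : ∀ σ : Equiv.Perm (Fin N),
      ∫⁻ x in D, f (σ • x) = ∫⁻ x in D, f x := fun σ =>
    lintegral_congr_ae (ae_restrict_of_ae (hf σ))
  rw [tsum_congr h, tsum_fintype]
  simp [Finset.sum_const, Fintype.card_perm, mul_comm]

lemma stmt12_eLpNorm_eq
    (hDfd : IsFundamentalDomain (Equiv.Perm (Fin N)) D
      (volume : Measure (Fin N → Fin d → ℝ)))
    {f : (Fin N → Fin d → ℝ) → ℂ}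
    (hf : ∀ σ : Equiv.Perm (Fin N),
      ∀ᵐ x ∂(volume : Measure (Fin N → Fin d → ℝ)), f (σ • x) = f x) :
    eLpNorm f 2 (volume : Measure (Fin N → Fin d → ℝ))
      = (N.factorial : ℝ≥0∞) ^ ((2:ℝ)⁻¹)
        * eLpNorm f 2 ((volume : Measure (Fin N → Fin d → ℝ)).restrict D) := by
  rw [eLpNorm_eq_lintegral_rpow_enorm_toReal two_ne_zero ENNReal.ofNat_ne_top,
      eLpNorm_eq_lintegral_rpow_enorm_toReal two_ne_zero ENNReal.ofNat_ne_top]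
  have h := stmt12_lintegral_eq hDfd (fun x => ‖f x‖ₑ ^ (2:ℝ≥0∞).toReal)
    (fun σ => by filter_upwards [hf σ] with x hx; rw [hx])
  rw [h, ENNReal.mul_rpow_of_nonneg _ _ (by positivity : (0:ℝ) ≤ 1 / (2:ℝ≥0∞).toReal)]
  norm_num

end Aux

set_option maxHeartbeats 1000000 in
/-- The symmetric subspace `𝒮` of `L²(volume, ℂ)` over `Fin N → (Fin d → ℝ)` is a
closed linear subspace, and `ψ ↦ √(N!) · (ψ restricted to a fundamental domain D)` is a
linear isometric bijection from `𝒜` onto `L²(volume.restrict D, ℂ)`. -/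
theorem stmt_12 (N d : ℕ) (hN : 1 ≤ N) (hd : 1 ≤ d)
    (D : Set (Fin N → Fin d → ℝ)) (hDmeas : MeasurableSet D)
    (hDfd : IsFundamentalDomain (Equiv.Perm (Fin N)) D
      (volume : Measure (Fin N → Fin d → ℝ))) :
    ∃ A : Submodule ℂ (Lp ℂ 2 (volume : Measure (Fin N → Fin d → ℝ))),
      (A : Set (Lp ℂ 2 (volume : Measure (Fin N → Fin d → ℝ))))
        = {ψ : Lp ℂ 2 (volume : Measure (Fin N → Fin d → ℝ)) |
            ∀ σ : Equiv.Perm (Fin N), ∀ᵐ x ∂(volume : Measure (Fin N → Fin d → ℝ)),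
              ψ (x ∘ ⇑σ) = ψ x} ∧
      IsClosed (A : Set (Lp ℂ 2 (volume : Measure (Fin N → Fin d → ℝ)))) ∧
      ∃ e : A ≃ₗᵢ[ℂ] Lp ℂ 2 ((volume : Measure (Fin N → Fin d → ℝ)).restrict D),
        ∀ ψ : A, e ψ = ((Real.sqrt N.factorial : ℝ) : ℂ) •
          MemLp.toLp ⇑(ψ : Lp ℂ 2 (volume : Measure (Fin N → Fin d → ℝ)))
            ((Lp.memLp (ψ : Lp ℂ 2 (volume : Measure (Fin N → Fin d → ℝ)))).restrict D) := by
  classical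
  set μ : Measure (Fin N → Fin d → ℝ) := volume with hμ
  -- the composition operators
  set T : Equiv.Perm (Fin N) → (Lp ℂ 2 μ →ₗᵢ[ℂ] Lp ℂ 2 μ) :=
    fun σ => Lp.compMeasurePreservingₗᵢ ℂ _ (stmt12_mp N d σ) with hT
  have hTcoe : ∀ σ (ψ : Lp ℂ 2 μ), ⇑(T σ ψ) =ᵐ[μ] ⇑ψ ∘ (fun x => σ • x) :=
    fun σ ψ => Lp.coeFn_compMeasurePreserving ψ (stmt12_mp N d σ)
  set A : Submodule ℂ (Lp ℂ 2 μ) :=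
    { carrier := {ψ | ∀ σ, T σ ψ = ψ}
      add_mem' := fun {a b} ha hb σ => by rw [map_add, ha σ, hb σ]
      zero_mem' := fun σ => map_zero _
      smul_mem' := fun z a ha σ => by rw [_root_.map_smul, ha σ] } with hA
  have hAmem : ∀ ψ : Lp ℂ 2 μ, ψ ∈ A ↔ ∀ σ, T σ ψ = ψ := fun ψ => Iff.rfl
  refine ⟨A, ?_, ?_, ?_⟩
  · -- set equality
    ext ψ
    rw [SetLike.mem_coe, hAmem ψ]
    simp only [Set.mem_setOf_eq]
    constructor
    · intro h σ
      have h1 : ⇑(T σ⁻¹ ψ) =ᵐ[μ] ⇑ψ := by rw [h σ⁻¹]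
      filter_upwards [(hTcoe σ⁻¹ ψ).symm.trans h1] with x hx
      have hxe : x ∘ ⇑σ = σ⁻¹ • x := by
        rw [stmt12_smul_def, inv_inv]
      rw [hxe, ← hx]
      rfl
    · intro h σ
      apply Lp.ext
      refine (hTcoe σ ψ).trans ?_
      filter_upwards [h σ⁻¹] with x hx
      simpa [stmt12_smul_def] using hx
  · -- closedness
    have hset : (A : Set (Lp ℂ 2 μ)) = ⋂ σ, {ψ | T σ ψ = ψ} := by
      ext ψ; rw [SetLike.mem_coe, hAmem ψ]; simp [Set.mem_iInter]
    rw [hset]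
    exact isClosed_iInter fun σ => isClosed_eq (T σ).continuous continuous_id
  · -- the isometry
    set c : ℝ := Real.sqrt N.factorial with hc
    have hcpos : 0 < c := Real.sqrt_pos.mpr (by exact_mod_cast N.factorial_pos)
    have hRmem : ∀ ψ : Lp ℂ 2 μ, MemLp (⇑ψ) 2 (μ.restrict D) :=
      fun ψ => (Lp.memLp ψ).restrict D
    set R : Lp ℂ 2 μ → Lp ℂ 2 (μ.restrict D) :=
      fun ψ => MemLp.toLp ⇑ψ (hRmem ψ) with hR
    have Rcoe : ∀ ψ : Lp ℂ 2 μ, ⇑(R ψ) =ᵐ[μ.restrict D] ⇑ψ :=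
      fun ψ => MemLp.coeFn_toLp (hRmem ψ)
    have Radd : ∀ ψ φ : Lp ℂ 2 μ, R (ψ + φ) = R ψ + R φ := by
      intro ψ φ
      apply Lp.ext
      filter_upwards [Rcoe (ψ + φ), Lp.coeFn_add (R ψ) (R φ), Rcoe ψ, Rcoe φ,
        ae_restrict_of_ae (μ := μ) (s := D) (Lp.coeFn_add ψ φ)] with x h1 h2 h3 h4 h5
      rw [h1, h5, h2, Pi.add_apply, Pi.add_apply, h3, h4]
    have Rsmul : ∀ (z : ℂ) (ψ : Lp ℂ 2 μ), R (z • ψ) = z • R ψ := by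
      intro z ψ
      apply Lp.ext
      filter_upwards [Rcoe (z • ψ), Lp.coeFn_smul z (R ψ), Rcoe ψ,
        ae_restrict_of_ae (μ := μ) (s := D) (Lp.coeFn_smul z ψ)] with x h1 h2 h3 h4
      rw [h1, h4, h2, Pi.smul_apply, Pi.smul_apply, h3]
    -- the norm identity
    have hnorm : ∀ ψ : Lp ℂ 2 μ, (∀ σ, T σ ψ = ψ) → ‖ψ‖ = c * ‖R ψ‖ := by
      intro ψ hψ
      have hinv : ∀ σ : Equiv.Perm (Fin N), ∀ᵐ x ∂μ, (⇑ψ) (σ • x) = ψ x := by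
        intro σ
        have h1 : ⇑(T σ ψ) =ᵐ[μ] ⇑ψ := by rw [hψ σ]
        filter_upwards [(hTcoe σ ψ).symm.trans h1] with x hx
        exact hx
      have he := stmt12_eLpNorm_eq hDfd hinv
      have hRe : eLpNorm ⇑(R ψ) 2 (μ.restrict D) = eLpNorm ⇑ψ 2 (μ.restrict D) :=
        eLpNorm_congr_ae (Rcoe ψ)
      rw [Lp.norm_def, Lp.norm_def, hRe, he, ENNReal.toReal_mul]
      congr 1
      rw [← ENNReal.toReal_rpow, ENNReal.toReal_natCast, hc, Real.sqrt_eq_rpow, one_div]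
    -- the linear map
    set L : A →ₗ[ℂ] Lp ℂ 2 (μ.restrict D) :=
      { toFun := fun ψ => ((c : ℝ) : ℂ) • R (ψ : Lp ℂ 2 μ)
        map_add' := fun a b => by
          simp only [Submodule.coe_add, Radd, smul_add]
        map_smul' := fun z a => by
          simp only [SetLike.val_smul, Rsmul, RingHom.id_apply]
          rw [smul_comm] } with hL
    have hLapply : ∀ ψ : A, L ψ = ((c : ℝ) : ℂ) • R (ψ : Lp ℂ 2 μ) := fun ψ => rfl
    have hLnorm : ∀ ψ : A, ‖L ψ‖ = ‖ψ‖ := by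
      intro ψ
      have h1 : ‖(ψ : Lp ℂ 2 μ)‖ = c * ‖R (ψ : Lp ℂ 2 μ)‖ := hnorm ψ.1 ψ.2
      rw [hLapply ψ, norm_smul, Complex.norm_real, Real.norm_eq_abs, abs_of_pos hcpos]
      exact h1.symm
    -- surjectivity
    have hsurj : Function.Surjective L := by
      intro φ
      set f0 : (Fin N → Fin d → ℝ) → ℂ := D.indicator ⇑φ with hf0
      set Ψ : (Fin N → Fin d → ℝ) → ℂ :=
        fun x => ∑ σ : Equiv.Perm (Fin N), f0 (σ • x) with hΨdef
      have hΨinv : ∀ (τ : Equiv.Perm (Fin N)) (x), Ψ (τ • x) = Ψ x := by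
        intro τ x
        exact Fintype.sum_equiv (Equiv.mulRight τ) _ _
          (fun σ => (congrArg f0 (mul_smul σ τ x)).symm)
      have hbad : ∀ σ : Equiv.Perm (Fin N), σ ≠ 1 →
          μ {x | x ∈ D ∧ σ • x ∈ D} = 0 := by
        intro σ hσ
        have h1 : (1 : Equiv.Perm (Fin N)) ≠ σ⁻¹ := by
          simpa [eq_comm] using inv_ne_one.mpr hσ
        have h2 := hDfd.aedisjoint h1
        have h3 : {x | x ∈ D ∧ σ • x ∈ D}
            = (1 : Equiv.Perm (Fin N)) • D ∩ σ⁻¹ • D := by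
          ext x
          simp [Set.mem_smul_set_iff_inv_smul_mem, inv_inv]
        rw [h3]
        exact h2
      have haeD : ∀ᵐ x ∂(μ.restrict D), Ψ x = ⇑φ x := by
        have h2 : ∀ᵐ x ∂μ, ∀ σ : Equiv.Perm (Fin N), σ ≠ 1 → ¬(x ∈ D ∧ σ • x ∈ D) := by
          rw [ae_all_iff]
          intro σ
          by_cases hσ : σ = 1
          · simp [hσ]
          · have h3 := hbad σ hσ
            filter_upwards [measure_eq_zero_iff_ae_notMem.mp h3] with x hx
            intro _
            exact hx
        filter_upwards [ae_restrict_mem hDmeas, ae_restrict_of_ae h2] with x hxD hx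
        have hz : ∀ σ ∈ (Finset.univ : Finset (Equiv.Perm (Fin N))), σ ≠ 1 →
            f0 (σ • x) = 0 := by
          intro σ _ hσ
          have hnd : σ • x ∉ D := fun hmem => (hx σ hσ) ⟨hxD, hmem⟩
          simp [hf0, Set.indicator_of_notMem hnd]
        show (∑ σ : Equiv.Perm (Fin N), f0 (σ • x)) = φ x
        rw [Finset.sum_eq_single_of_mem 1 (Finset.mem_univ _) hz, one_smul,
          hf0, Set.indicator_of_mem hxD]
      have hASM : AEStronglyMeasurable Ψ μ := by
        apply Finset.aestronglyMeasurable_fun_sum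
        intro σ _
        exact ((aestronglyMeasurable_indicator_iff hDmeas).mpr
          (Lp.aestronglyMeasurable φ)).comp_measurePreserving (stmt12_mp N d σ)
      have hΨinv' : ∀ σ : Equiv.Perm (Fin N), ∀ᵐ x ∂μ, Ψ (σ • x) = Ψ x :=
        fun σ => Filter.Eventually.of_forall (hΨinv σ)
      have hsn := stmt12_eLpNorm_eq hDfd hΨinv'
      have hΨmem : MemLp Ψ 2 μ := by
        refine ⟨hASM, ?_⟩
        rw [hsn, eLpNorm_congr_ae haeD]
        exact ENNReal.mul_lt_top
          (ENNReal.rpow_lt_top_of_nonneg (by norm_num) (ENNReal.natCast_ne_top _))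
          (Lp.eLpNorm_lt_top φ)
      set ψ0 : Lp ℂ 2 μ := hΨmem.toLp Ψ with hψ0
      have hcoe0 : ⇑ψ0 =ᵐ[μ] Ψ := MemLp.coeFn_toLp hΨmem
      have hmem0 : ψ0 ∈ A := by
        intro σ
        apply Lp.ext
        refine (hTcoe σ ψ0).trans ?_
        have h1 : ⇑ψ0 ∘ (fun x => σ • x) =ᵐ[μ] Ψ ∘ (fun x => σ • x) :=
          (stmt12_mp N d σ).quasiMeasurePreserving.ae_eq_comp hcoe0
        refine h1.trans ?_
        have h2 : Ψ ∘ (fun x => σ • x) = Ψ := funext fun x => hΨinv σ x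
        rw [h2]
        exact hcoe0.symm
      have hRψ0 : R ψ0 = φ := by
        apply Lp.ext
        filter_upwards [Rcoe ψ0, ae_restrict_of_ae (μ := μ) (s := D) hcoe0, haeD]
          with x h1 h2 h3
        rw [h1, h2, h3]
      refine ⟨(((c : ℝ) : ℂ))⁻¹ • (⟨ψ0, hmem0⟩ : A), ?_⟩
      rw [L.map_smul]
      rw [hLapply ⟨ψ0, hmem0⟩]
      show (((c : ℝ) : ℂ))⁻¹ • (((c : ℝ) : ℂ) • R ψ0) = φ
      rw [hRψ0, smul_smul, inv_mul_cancel₀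
        (Complex.ofReal_ne_zero.mpr (ne_of_gt hcpos)), one_smul]
    refine ⟨LinearIsometryEquiv.ofSurjective ⟨L, hLnorm⟩ hsurj, fun ψ => ?_⟩
    rfl
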